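/- Let h : [0, ∞) → ℝ be differentiable, convex, strictly decreasing (h' < 0), with values in (0,1], and let D > 0. Then for every candidate required effort e_c ≥ 0 there exists a differentiable cost function c : [0, ∞) → ℝ with c' > 0 and strictly convex, such that the expected social welfare EW(e) = -h(e)·D - c(e) attains a unique maximum over [0, ∞) at some e* with e* ≠ e_c. Hence no rule that sets the public model's required effort purely as a function of the harm function h and the damage cost D, without regard to the platform's cost function c, can always incentivize the socially optimal level of effort. -/

import Mathlib

open Set

/-- Tangent line inequality for a convex function on `Ici 0`. -/
lemma tangent_le_of_convex {h h' : ℝ → ℝ}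
    (hhder : ∀ e ∈ Set.Ici (0 : ℝ), HasDerivWithinAt h (h' e) (Set.Ici 0) e)
    (hhconv : ConvexOn ℝ (Set.Ici 0) h)
    {x y : ℝ} (hx : x ∈ Set.Ici (0 : ℝ)) (hy : y ∈ Set.Ici (0 : ℝ)) :
    h x + h' x * (y - x) ≤ h y := by
  rcases lt_trichotomy x y with hlt | heq | hgt
  · have := hhconv.le_slope_of_hasDerivWithinAt hx hy hlt (hhder x hx)
    rw [slope_def_field] at this
    have hne : y - x ≠ 0 := sub_ne_zero.mpr (ne_of_gt hlt)
    have h1 : h' x * (y - x) ≤ (h y - h x) / (y - x) * (y - x) := by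
      apply mul_le_mul_of_nonneg_right this (by linarith)
    rw [div_mul_cancel₀ _ hne] at h1
    linarith
  · simp [heq]
  · have := hhconv.slope_le_of_hasDerivWithinAt hy hx hgt (hhder x hx)
    rw [slope_def_field] at this
    have hne : x - y ≠ 0 := sub_ne_zero.mpr (ne_of_gt hgt)
    have h1 : (h x - h y) / (x - y) * (x - y) ≤ h' x * (x - y) := by
      apply mul_le_mul_of_nonneg_right this (by linarith)
    rw [div_mul_cancel₀ _ hne] at h1
    linarith

/-- **Proposition `impossbility-result`.**
Let `h : [0,∞) → ℝ` be differentiable, convex, strictly decreasing (`h' < 0`),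
with values in `(0,1]`, and let `D > 0`.  Then for every candidate required
effort `e_c ≥ 0` there exists a differentiable cost function `c : [0,∞) → ℝ`
with `c' > 0` and strictly convex, such that the expected social welfare
`EW e = -h e * D - c e` attains a unique maximum over `[0,∞)` at some
`e* ≠ e_c`.  Hence no rule setting the required effort purely as a function of
`h` and `D`, without regard to `c`, always incentivizes the socially optimal
effort. -/
theorem no_cost_free_rule_is_always_optimal
    (h h' : ℝ → ℝ)
    (hhder : ∀ e ∈ Set.Ici (0 : ℝ), HasDerivWithinAt h (h' e) (Set.Ici 0) e)
    (hhconv : ConvexOn ℝ (Set.Ici 0) h)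
    (hh'neg : ∀ e ∈ Set.Ici (0 : ℝ), h' e < 0)
    (hhval : ∀ e ∈ Set.Ici (0 : ℝ), h e ∈ Set.Ioc (0 : ℝ) 1)
    (D : ℝ) (hD : 0 < D)
    (e_c : ℝ) (he_c : 0 ≤ e_c) :
    ∃ c c' : ℝ → ℝ,
      (∀ e ∈ Set.Ici (0 : ℝ), HasDerivWithinAt c (c' e) (Set.Ici 0) e) ∧
      (∀ e ∈ Set.Ici (0 : ℝ), 0 < c' e) ∧
      StrictConvexOn ℝ (Set.Ici 0) c ∧
      ∃ estar ∈ Set.Ici (0 : ℝ), estar ≠ e_c ∧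
        ∀ e ∈ Set.Ici (0 : ℝ), e ≠ estar →
          -h e * D - c e < -h estar * D - c estar := by
  -- Choose the target optimum `estar`.
  have h1mem : (1 : ℝ) ∈ Set.Ici (0 : ℝ) := by norm_num
  -- first find `estar ≥ 0` with `estar ≠ e_c` and `-D * h' estar > 2 * estar`.
  obtain ⟨estar, hestar0, hestarne, hA⟩ :
      ∃ estar : ℝ, 0 ≤ estar ∧ estar ≠ e_c ∧ 2 * estar < -D * h' estar := by
    by_cases hec : e_c = 0
    · -- pick a small positive `estar`
      set t : ℝ := min 1 (-D * h' 1 / 4) with ht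
      have h'1 : h' 1 < 0 := hh'neg 1 h1mem
      have htpos : 0 < t := lt_min one_pos (by nlinarith)
      refine ⟨t, htpos.le, by rw [hec]; exact ne_of_gt htpos, ?_⟩
      have htmem : t ∈ Set.Ici (0 : ℝ) := htpos.le
      -- `h' t ≤ h' 1` since `t ≤ 1` (by convexity slopes)
      have hmono : h' t ≤ h' 1 := by
        rcases lt_or_eq_of_le (min_le_left 1 (-D * h' 1 / 4) : t ≤ 1) with hlt | heq
        · have hs1 := hhconv.le_slope_of_hasDerivWithinAt htmem h1mem hlt (hhder t htmem)
          have hs2 := hhconv.slope_le_of_hasDerivWithinAt htmem h1mem hlt (hhder 1 h1mem)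
          exact hs1.trans hs2
        · rw [ht.trans heq]
      have ht4 : t ≤ -D * h' 1 / 4 := min_le_right _ _
      nlinarith
    · refine ⟨0, le_refl 0, Ne.symm hec, ?_⟩
      have := hh'neg 0 (by norm_num)
      nlinarith
  set A : ℝ := -D * h' estar with hAdef
  refine ⟨fun e => A * e + (e - estar) ^ 2, fun e => A + 2 * (e - estar), ?_, ?_, ?_,
    estar, hestar0, hestarne, ?_⟩
  · intro e he
    have h1 := (hasDerivWithinAt_id e (Set.Ici (0:ℝ))).const_mul A
    have h2 := ((hasDerivWithinAt_id e (Set.Ici (0:ℝ))).sub_const estar).pow 2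
    have h3 := h1.add h2
    simp only [id] at h3
    refine h3.congr_deriv ?_
    norm_num
  · intro e he
    simp only [Set.mem_Ici] at he
    show 0 < A + 2 * (e - estar)
    linarith
  · have hsq : StrictConvexOn ℝ (Set.Ici (0:ℝ)) fun e : ℝ => (e - estar) ^ 2 := by
      have h2 : StrictConvexOn ℝ (Set.univ : Set ℝ) fun x : ℝ => x ^ 2 :=
        Even.strictConvexOn_pow (by norm_num) (by norm_num)
      have h3 := (h2.translate_right (-estar)).subset (subset_univ _) (convex_Ici (0:ℝ))
      have : (fun e : ℝ => (e - estar) ^ 2) = ((fun x : ℝ => x ^ 2) ∘ fun z : ℝ => -estar + z) := by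
        funext x; simp [Function.comp, sub_eq_add_neg, add_comm]
      rw [this]; exact h3
    have haff : ConvexOn ℝ (Set.Ici (0:ℝ)) fun e : ℝ => A * e :=
      (ConvexOn.smul (c := A) (le_of_lt (by nlinarith : (0:ℝ) < A)) ?_)
    · exact haff.add_strictConvexOn hsq
    · exact convexOn_id (convex_Ici 0)
  · intro e he hne
    have htan := tangent_le_of_convex hhder hhconv hestar0 he
    have hsq : 0 < (e - estar) ^ 2 := by
      have : e - estar ≠ 0 := sub_ne_zero.mpr hne
      positivity
    have key : D * (h estar + h' estar * (e - estar)) ≤ D * h e :=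
      mul_le_mul_of_nonneg_left htan hD.le
    show -h e * D - (A * e + (e - estar) ^ 2) <
      -h estar * D - (A * estar + (estar - estar) ^ 2)
    rw [hAdef]
    nlinarith [key, hsq]
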